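/- Any interval graph can be made into the competition graph of a doubly partial order by adding sufficiently many isolated vertices: for every interval graph G there exists a natural number k and a doubly partial order D such that the competition graph of D is isomorphic to the graph obtained from G by adding k isolated vertices. -/

import Mathlib

/-- `prec x y` means `x₁ < y₁` and `x₂ < y₂`, written `x ≺ y`. -/
def prec (x y : ℝ × ℝ) : Prop := x.1 < y.1 ∧ x.2 < y.2

/-- The competition graph of the doubly partial order on a finite set
`V ⊆ ℝ²` (arcs `(x,v)` exactly when `v ≺ x`). -/
def competitionGraph (V : Finset (ℝ × ℝ)) : SimpleGraph {p : ℝ × ℝ // p ∈ V} where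
  Adj u w := u ≠ w ∧ ∃ z ∈ V, prec z u.1 ∧ prec z w.1
  symm := by
    constructor
    intro u w h
    exact ⟨Ne.symm h.1, by tauto⟩
  loopless := by
    constructor
    intro u h
    exact h.1 rfl

/-- A graph is an interval graph if there is an assignment of closed real
intervals to its vertices such that distinct vertices are adjacent iff the
corresponding intervals intersect. -/
def IsIntervalGraph {α : Type*} (G : SimpleGraph α) : Prop :=
  ∃ J : α → Set ℝ,
    (∀ v, ∃ a b : ℝ, a ≤ b ∧ J v = Set.Icc a b) ∧
    (∀ u w, u ≠ w → (G.Adj u w ↔ (J u ∩ J w).Nonempty))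

/-- The graph obtained from `G` by adding `k` isolated vertices. -/
def addIsolated {α : Type*} (G : SimpleGraph α) (k : ℕ) :
    SimpleGraph (α ⊕ Fin k) where
  Adj x y := ∃ a b : α, x = Sum.inl a ∧ y = Sum.inl b ∧ G.Adj a b
  symm := by
    constructor
    rintro x y ⟨a, b, rfl, rfl, hab⟩
    exact ⟨b, a, rfl, rfl, hab.symm⟩
  loopless := by
    constructor
    rintro x ⟨a, b, rfl, hba, hab⟩
    rw [Sum.inl.injEq] at hba
    subst hba
    exact hab.ne rfl

noncomputable section CGAux

variable {α : Type*} [Fintype α]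

/-- Rank of `x` among a finite set `E` of reals. -/
def cgRank (E : Finset ℝ) (x : ℝ) : ℤ := ((E.filter (fun y => y ≤ x)).card : ℤ)

lemma cgRank_mono (E : Finset ℝ) {x y : ℝ} (h : x ≤ y) : cgRank E x ≤ cgRank E y := by
  have hsub : E.filter (fun z => z ≤ x) ⊆ E.filter (fun z => z ≤ y) := by
    intro z hz
    simp only [Finset.mem_filter] at *
    exact ⟨hz.1, hz.2.trans h⟩
  unfold cgRank
  exact_mod_cast Finset.card_le_card hsub

lemma cgRank_strict (E : Finset ℝ) {x y : ℝ} (h : x < y) (hy : y ∈ E) :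
    cgRank E x < cgRank E y := by
  have hsub : E.filter (fun z => z ≤ x) ⊆ E.filter (fun z => z ≤ y) := by
    intro z hz
    simp only [Finset.mem_filter] at *
    exact ⟨hz.1, hz.2.trans h.le⟩
  have hss : E.filter (fun z => z ≤ x) ⊂ E.filter (fun z => z ≤ y) := by
    rw [Finset.ssubset_iff_of_subset hsub]
    exact ⟨y, Finset.mem_filter.mpr ⟨hy, le_refl y⟩,
      fun hc => absurd (Finset.mem_filter.mp hc).2 (not_le.mpr h)⟩
  unfold cgRank
  exact_mod_cast Finset.card_lt_card hss

lemma cgRank_le_of_rank_le (E : Finset ℝ) {x y : ℝ} (hx : x ∈ E)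
    (h : cgRank E x ≤ cgRank E y) : x ≤ y := by
  by_contra hc
  exact absurd h (not_le.mpr (cgRank_strict E (not_le.mp hc) hx))

/-- The endpoint set. -/
def cgE (a b : α → ℝ) : Finset ℝ := Finset.univ.image a ∪ Finset.univ.image b

lemma mem_cgE_a (a b : α → ℝ) (v : α) : a v ∈ cgE a b :=
  Finset.mem_union_left _ (Finset.mem_image_of_mem a (Finset.mem_univ v))

lemma mem_cgE_b (a b : α → ℝ) (v : α) : b v ∈ cgE a b :=
  Finset.mem_union_right _ (Finset.mem_image_of_mem b (Finset.mem_univ v))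

/-- Integer left / right endpoints. -/
def cgA (a b : α → ℝ) (v : α) : ℤ := cgRank (cgE a b) (a v)
def cgB (a b : α → ℝ) (v : α) : ℤ := cgRank (cgE a b) (b v)

/-- Small perturbation, injective, valued in `(0, 1/4)`. -/
def cgδ (v : α) : ℝ :=
  ((Fintype.equivFin α v : ℕ) + 1 : ℝ) / (8 * ((Fintype.card α : ℝ) + 1))

lemma cgδ_pos (v : α) : 0 < cgδ v := by
  unfold cgδ
  positivity

lemma cgδ_lt (v : α) : cgδ v < 1/4 := by
  unfold cgδ
  rw [div_lt_iff₀ (by positivity)]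
  have h1 : ((Fintype.equivFin α v : ℕ) : ℝ) < (Fintype.card α : ℝ) := by
    exact_mod_cast (Fintype.equivFin α v).2
  nlinarith

lemma cgδ_inj : Function.Injective (cgδ (α := α)) := by
  intro u v h
  unfold cgδ at h
  have hden : (0:ℝ) < 8 * ((Fintype.card α : ℝ) + 1) := by positivity
  rw [div_eq_div_iff (ne_of_gt hden) (ne_of_gt hden)] at h
  have h2 : ((Fintype.equivFin α u : ℕ) : ℝ) = ((Fintype.equivFin α v : ℕ) : ℝ) := by
    have := mul_right_cancel₀ (ne_of_gt hden) h
    linarith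
  have h3 : (Fintype.equivFin α u : ℕ) = (Fintype.equivFin α v : ℕ) := by exact_mod_cast h2
  exact (Fintype.equivFin α).injective (Fin.ext h3)

/-- The point for vertex `v`. -/
def cgP (a b : α → ℝ) (v : α) : ℝ × ℝ :=
  ((cgB a b v : ℝ) + cgδ v, -(cgA a b v : ℝ) + cgδ v)

/-- The prey point for the integer value `t`. -/
def cgQ (t : ℤ) : ℝ × ℝ := ((t : ℝ) - 1/2, -(t : ℝ) - 1/2)

/-- The prey values. -/
def cgT (a b : α → ℝ) : Finset ℤ := Finset.univ.image (cgA a b)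

/-- The full vertex set. -/
def cgV (a b : α → ℝ) : Finset (ℝ × ℝ) :=
  Finset.univ.image (cgP a b) ∪ (cgT a b).image cgQ

lemma prec_QP (a b : α → ℝ) (t : ℤ) (v : α) :
    prec (cgQ t) (cgP a b v) ↔ (cgA a b v ≤ t ∧ t ≤ cgB a b v) := by
  constructor
  · rintro ⟨h1, h2⟩
    simp only [cgQ, cgP] at h1 h2
    have hd := cgδ_lt v
    constructor
    · have h : (cgA a b v : ℝ) < (t : ℝ) + 1 := by linarith
      have h' : cgA a b v < t + 1 := by exact_mod_cast h
      omega
    · have h : (t : ℝ) < (cgB a b v : ℝ) + 1 := by linarith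
      have h' : t < cgB a b v + 1 := by exact_mod_cast h
      omega
  · rintro ⟨h1, h2⟩
    have hd := cgδ_pos v
    have h1' : (cgA a b v : ℝ) ≤ (t : ℝ) := by exact_mod_cast h1
    have h2' : (t : ℝ) ≤ (cgB a b v : ℝ) := by exact_mod_cast h2
    constructor
    · show (cgQ t).1 < (cgP a b v).1
      simp only [cgQ, cgP]
      linarith
    · show (cgQ t).2 < (cgP a b v).2
      simp only [cgQ, cgP]
      linarith

lemma prec_PP (a b : α → ℝ) {u v : α} (h : prec (cgP a b u) (cgP a b v)) :
    cgA a b v ≤ cgA a b u ∧ cgB a b u ≤ cgB a b v := by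
  obtain ⟨h1, h2⟩ := h
  simp only [cgP] at h1 h2
  have d1 := cgδ_pos u
  have d2 := cgδ_pos v
  have d3 := cgδ_lt u
  have d4 := cgδ_lt v
  constructor
  · have h : (cgA a b v : ℝ) < (cgA a b u : ℝ) + 1 := by linarith
    have h' : cgA a b v < cgA a b u + 1 := by exact_mod_cast h
    omega
  · have h : (cgB a b u : ℝ) < (cgB a b v : ℝ) + 1 := by linarith
    have h' : cgB a b u < cgB a b v + 1 := by exact_mod_cast h
    omega

lemma not_prec_PQ (a b : α → ℝ) (hab : ∀ v, a v ≤ b v) (v : α) (t : ℤ) :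
    ¬ prec (cgP a b v) (cgQ t) := by
  rintro ⟨h1, h2⟩
  simp only [cgQ, cgP] at h1 h2
  have hd := cgδ_pos v
  have hABv : (cgA a b v : ℝ) ≤ (cgB a b v : ℝ) := by
    exact_mod_cast cgRank_mono (cgE a b) (hab v)
  linarith

lemma not_prec_QQ (s t : ℤ) : ¬ prec (cgQ s) (cgQ t) := by
  rintro ⟨h1, h2⟩
  simp only [cgQ] at h1 h2
  have hs : (s : ℝ) < t := by linarith
  have ht : (t : ℝ) < s := by linarith
  linarith

lemma cgP_inj (a b : α → ℝ) : Function.Injective (cgP a b) := by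
  intro u v h
  simp only [cgP, Prod.mk.injEq] at h
  obtain ⟨h1, h2⟩ := h
  have d1 := cgδ_pos u
  have d2 := cgδ_pos v
  have d3 := cgδ_lt u
  have d4 := cgδ_lt v
  have hlt : (cgB a b u : ℝ) < (cgB a b v : ℝ) + 1 := by linarith
  have hgt : (cgB a b v : ℝ) < (cgB a b u : ℝ) + 1 := by linarith
  have hlt' : cgB a b u < cgB a b v + 1 := by exact_mod_cast hlt
  have hgt' : cgB a b v < cgB a b u + 1 := by exact_mod_cast hgt
  have hBB : cgB a b u = cgB a b v := by omega
  have hδ : cgδ u = cgδ v := by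
    have hc : (cgB a b u : ℝ) = (cgB a b v : ℝ) := by exact_mod_cast hBB
    linarith
  exact cgδ_inj hδ

lemma cgP_ne_cgQ (a b : α → ℝ) (v : α) (t : ℤ) : cgP a b v ≠ cgQ t := by
  intro h
  simp only [cgP, cgQ, Prod.mk.injEq] at h
  obtain ⟨h1, h2⟩ := h
  have d1 := cgδ_pos v
  have d3 := cgδ_lt v
  have hlt : (cgA a b v : ℝ) < (t : ℝ) + 1 := by linarith
  have hgt : (t : ℝ) < (cgA a b v : ℝ) := by linarith
  have hlt' : cgA a b v < t + 1 := by exact_mod_cast hlt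
  have hgt' : t < cgA a b v := by exact_mod_cast hgt
  omega

lemma cgQ_inj : Function.Injective cgQ := by
  intro s t h
  simp only [cgQ, Prod.mk.injEq] at h
  have : (s : ℝ) = t := by linarith [h.1]
  exact_mod_cast this

end CGAux

/-- Every (finite) interval graph becomes the competition graph of a doubly
partial order after adding sufficiently many isolated vertices. -/
theorem intervalGraph_addIsolated_is_competitionGraph {α : Type*} [Fintype α]
    (G : SimpleGraph α) (hG : IsIntervalGraph G) :
    ∃ k : ℕ, ∃ V : Finset (ℝ × ℝ),
      Nonempty (competitionGraph V ≃g addIsolated G k) := by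
  classical
  obtain ⟨J, hJ1, hJ2⟩ := hG
  choose a b hab hJab using hJ1
  set T : Finset ℤ := cgT a b with hT
  set V : Finset (ℝ × ℝ) := cgV a b with hV
  refine ⟨T.card, V, ?_⟩
  -- membership facts
  have memPV : ∀ v, cgP a b v ∈ V := fun v =>
    Finset.mem_union_left _ (Finset.mem_image_of_mem _ (Finset.mem_univ v))
  have memQV : ∀ t ∈ T, cgQ t ∈ V := fun t ht =>
    Finset.mem_union_right _ (Finset.mem_image_of_mem _ ht)
  have memV : ∀ z ∈ V, (∃ v : α, z = cgP a b v) ∨ (∃ t ∈ T, z = cgQ t) := by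
    intro z hz
    simp only [hV, cgV, Finset.mem_union, Finset.mem_image, Finset.mem_univ, true_and] at hz
    rcases hz with ⟨v, hv⟩ | ⟨t, ht, hq⟩
    · exact Or.inl ⟨v, hv.symm⟩
    · exact Or.inr ⟨t, ht, hq.symm⟩
  have memAT : ∀ v : α, cgA a b v ∈ T := fun v =>
    Finset.mem_image_of_mem _ (Finset.mem_univ v)
  -- no prey below a prey point
  have noPreyForQ : ∀ (t : ℤ) (z : ℝ × ℝ), z ∈ V → ¬ prec z (cgQ t) := by
    intro t z hz hp
    rcases memV z hz with ⟨w, rfl⟩ | ⟨s, _, rfl⟩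
    · exact not_prec_PQ a b hab w t hp
    · exact not_prec_QQ s t hp
  -- the key adjacency characterization
  have hAdj : ∀ u v : α, u ≠ v →
      ((∃ z ∈ V, prec z (cgP a b u) ∧ prec z (cgP a b v)) ↔ G.Adj u v) := by
    intro u v huv
    constructor
    · rintro ⟨z, hzV, hzu, hzv⟩
      have key : ∃ w : α, a u ≤ a w ∧ a w ≤ b u ∧ a v ≤ a w ∧ a w ≤ b v := by
        rcases memV z hzV with ⟨w, rfl⟩ | ⟨t, ht, rfl⟩
        · obtain ⟨h1, h2⟩ := prec_PP a b hzu
          obtain ⟨h3, h4⟩ := prec_PP a b hzv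
          exact ⟨w,
            cgRank_le_of_rank_le _ (mem_cgE_a a b u) h1,
            le_trans (hab w) (cgRank_le_of_rank_le _ (mem_cgE_b a b w) h2),
            cgRank_le_of_rank_le _ (mem_cgE_a a b v) h3,
            le_trans (hab w) (cgRank_le_of_rank_le _ (mem_cgE_b a b w) h4)⟩
        · simp only [hT, cgT, Finset.mem_image, Finset.mem_univ, true_and] at ht
          obtain ⟨w, rfl⟩ := ht
          obtain ⟨h1, h2⟩ := (prec_QP a b _ u).mp hzu
          obtain ⟨h3, h4⟩ := (prec_QP a b _ v).mp hzv
          exact ⟨w,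
            cgRank_le_of_rank_le _ (mem_cgE_a a b u) h1,
            cgRank_le_of_rank_le _ (mem_cgE_a a b w) h2,
            cgRank_le_of_rank_le _ (mem_cgE_a a b v) h3,
            cgRank_le_of_rank_le _ (mem_cgE_a a b w) h4⟩
      obtain ⟨w, hw1, hw2, hw3, hw4⟩ := key
      refine (hJ2 u v huv).mpr ⟨a w, ?_, ?_⟩
      · rw [hJab u]; exact ⟨hw1, hw2⟩
      · rw [hJab v]; exact ⟨hw3, hw4⟩
    · intro hGuv
      have hne := (hJ2 u v huv).mp hGuv
      rw [hJab u, hJab v] at hne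
      obtain ⟨x, hxu, hxv⟩ := hne
      rcases le_total (a u) (a v) with hle | hle
      · refine ⟨cgQ (cgA a b v), memQV _ (memAT v), ?_, ?_⟩
        · rw [prec_QP]
          exact ⟨cgRank_mono _ hle, cgRank_mono _ (le_trans hxv.1 hxu.2)⟩
        · rw [prec_QP]
          exact ⟨le_refl _, cgRank_mono _ (hab v)⟩
      · refine ⟨cgQ (cgA a b u), memQV _ (memAT u), ?_, ?_⟩
        · rw [prec_QP]
          exact ⟨le_refl _, cgRank_mono _ (hab u)⟩
        · rw [prec_QP]
          exact ⟨cgRank_mono _ hle, cgRank_mono _ (le_trans hxu.1 hxv.2)⟩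
  -- the bijection
  let eT : Fin T.card ≃ {x // x ∈ T} := T.equivFin.symm
  let F : α ⊕ Fin T.card → {p : ℝ × ℝ // p ∈ V} := fun x =>
    Sum.elim (fun v => ⟨cgP a b v, memPV v⟩)
      (fun i => ⟨cgQ ((eT i : ℤ)), memQV _ (eT i).2⟩) x
  have hFinj : Function.Injective F := by
    rintro (u | i) (v | j) h
    · simp only [F, Sum.elim_inl, Subtype.mk.injEq] at h
      exact congrArg Sum.inl (cgP_inj a b h)
    · simp only [F, Sum.elim_inl, Sum.elim_inr, Subtype.mk.injEq] at h
      exact absurd h (cgP_ne_cgQ a b u _)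
    · simp only [F, Sum.elim_inl, Sum.elim_inr, Subtype.mk.injEq] at h
      exact absurd h.symm (cgP_ne_cgQ a b v _)
    · simp only [F, Sum.elim_inr, Subtype.mk.injEq] at h
      have : (eT i : ℤ) = (eT j : ℤ) := cgQ_inj h
      have : eT i = eT j := Subtype.ext this
      exact congrArg Sum.inr (eT.injective this)
  have hFsurj : Function.Surjective F := by
    rintro ⟨z, hz⟩
    rcases memV z hz with ⟨v, rfl⟩ | ⟨t, ht, rfl⟩
    · exact ⟨Sum.inl v, rfl⟩
    · refine ⟨Sum.inr (eT.symm ⟨t, ht⟩), ?_⟩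
      simp only [F, Sum.elim_inr]
      congr 1
      rw [Equiv.apply_symm_apply]
  -- the isomorphism
  have hIso : addIsolated G T.card ≃g competitionGraph V := by
    refine ⟨Equiv.ofBijective F ⟨hFinj, hFsurj⟩, ?_⟩
    rintro (u | i) (v | j)
    · show (competitionGraph V).Adj (F (Sum.inl u)) (F (Sum.inl v)) ↔ _
      constructor
      · rintro ⟨hne, hz⟩
        have huv : u ≠ v := by
          rintro rfl; exact hne rfl
        exact ⟨u, v, rfl, rfl, (hAdj u v huv).mp hz⟩
      · rintro ⟨u', v', hu', hv', hadj⟩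
        rw [Sum.inl.injEq] at hu' hv'
        subst hu'; subst hv'
        refine ⟨?_, (hAdj u v hadj.ne).mpr hadj⟩
        intro hc
        have : cgP a b u = cgP a b v := congrArg Subtype.val hc
        exact hadj.ne (cgP_inj a b this)
    · show (competitionGraph V).Adj (F (Sum.inl u)) (F (Sum.inr j)) ↔ _
      constructor
      · rintro ⟨hne, z, hzV, hzu, hzq⟩
        exact absurd hzq (noPreyForQ _ z hzV)
      · rintro ⟨u', v', hu', hv', hadj⟩
        exact absurd hv' (by simp)
    · show (competitionGraph V).Adj (F (Sum.inr i)) (F (Sum.inl v)) ↔ _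
      constructor
      · rintro ⟨hne, z, hzV, hzq, hzv⟩
        exact absurd hzq (noPreyForQ _ z hzV)
      · rintro ⟨u', v', hu', hv', hadj⟩
        exact absurd hu' (by simp)
    · show (competitionGraph V).Adj (F (Sum.inr i)) (F (Sum.inr j)) ↔ _
      constructor
      · rintro ⟨hne, z, hzV, hzq, _⟩
        exact absurd hzq (noPreyForQ _ z hzV)
      · rintro ⟨u', v', hu', hv', hadj⟩
        exact absurd hu' (by simp)
  exact ⟨hIso.symm⟩
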